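/- In the Friedrichs model, for all f, g ∈ D(A*), the limits Γ₁ f = lim_{R→∞} ∫_{−R}^{R} f(x) dx and Γ₁ g = lim_{R→∞} ∫_{−R}^{R} g(x) dx exist, and with A* f = x f − c_f + ⟨f, ψ⟩φ and A* g = x g − c_g + ⟨g, ψ⟩φ one has the Green identity ⟨A* f, g⟩ − ⟨f, A* g⟩ = Γ₁ f · conj(Γ₂ g) − Γ₂ f · conj(Γ₁ g) + ⟨f, ψ⟩⟨φ, g⟩ − ⟨f, φ⟩⟨ψ, g⟩. -/

import Mathlib

open MeasureTheory Filter Topology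
open scoped InnerProductSpace

noncomputable section

/-- The space `L²(ℝ)` (complex valued). -/
abbrev L2 := Lp ℂ 2 (volume : Measure ℝ)

/-- Membership in the domain of the minimal Friedrichs-model operator `A`:
`x f(x) ∈ L²` and `lim_{R→∞} ∫_{-R}^R f = 0`. -/
abbrev inDomA (f : L2) : Prop :=
  MemLp (fun x : ℝ => (x : ℂ) * f x) 2 volume ∧
    Tendsto (fun R : ℝ => ∫ x in Set.Ioc (-R) R, f x) atTop (nhds 0)

/-- Membership in the domain of the maximal operator(s): there is a constant `c`
(the trace `Γ₂ f = c_f`) with `x f(x) − c ∈ L²`. -/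
abbrev inDomAstar (f : L2) (c : ℂ) : Prop :=
  MemLp (fun x : ℝ => (x : ℂ) * f x - c) 2 volume

/-- The minimal operator `A`: `(A f)(x) = x f(x) + ⟨f, φ⟩ ψ(x)`
(paper inner product `⟨f, φ⟩ = ⟪φ, f⟫` in Mathlib's convention). -/
def Aop (φ ψ f : L2) (hf : inDomA f) : L2 :=
  MemLp.toLp (fun x : ℝ => (x : ℂ) * f x) hf.1 + ⟪φ, f⟫_ℂ • ψ

/-- The adjoint expression `A*`: `(A* f)(x) = x f(x) − c_f + ⟨f, ψ⟩ φ(x)`. -/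
def AstarOp (φ ψ f : L2) (c : ℂ) (h : inDomAstar f c) : L2 :=
  MemLp.toLp (fun x : ℝ => (x : ℂ) * f x - c) h + ⟪ψ, f⟫_ℂ • φ

/-- The expression `Ã*`: `(Ã* f)(x) = x f(x) − c_f + ⟨f, φ⟩ ψ(x)`. -/
def AtildeStarOp (φ ψ f : L2) (c : ℂ) (h : inDomAstar f c) : L2 :=
  MemLp.toLp (fun x : ℝ => (x : ℂ) * f x - c) h + ⟪φ, f⟫_ℂ • ψ

/-- The operator `Ã`: `(Ã f)(x) = x f(x) + ⟨f, ψ⟩ φ(x)` on `D(A)`. -/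
def AtildeOp (φ ψ f : L2) (hf : inDomA f) : L2 :=
  MemLp.toLp (fun x : ℝ => (x : ℂ) * f x) hf.1 + ⟪ψ, f⟫_ℂ • φ

/- Auxiliary lemmas -/

lemma memLp_inv_Ioi : MemLp (fun x : ℝ => ((x : ℂ))⁻¹) 2 (volume.restrict (Set.Ioi (1:ℝ))) := by
  have hmeas : AEStronglyMeasurable (fun x : ℝ => ((x : ℂ))⁻¹)
      (volume.restrict (Set.Ioi (1:ℝ))) :=
    (Complex.measurable_ofReal.inv).aestronglyMeasurable
  rw [memLp_two_iff_integrable_sq_norm hmeas]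
  have h0 : IntegrableOn (fun x : ℝ => x ^ (-2 : ℝ)) (Set.Ioi (1:ℝ)) volume :=
    integrableOn_Ioi_rpow_of_lt (by norm_num) one_pos
  refine h0.congr_fun (fun x hx => ?_) measurableSet_Ioi
  have hx1 : (0:ℝ) < x := lt_trans one_pos hx
  beta_reduce
  rw [Real.rpow_neg hx1.le,
    norm_inv, Complex.norm_real, Real.norm_eq_abs, abs_of_pos hx1,
    Real.rpow_two, inv_pow]

lemma tail_int {u : ℝ → ℂ} (hu : MemLp u 2 volume) :
    IntegrableOn (fun x : ℝ => ((x : ℂ))⁻¹ * u x) (Set.Ioi (1:ℝ)) volume := by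
  rw [IntegrableOn, ← memLp_one_iff_integrable]
  have := (hu.restrict (Set.Ioi (1:ℝ))).smul memLp_inv_Ioi
    (p := 2) (q := 2) (r := 1)
  exact this

lemma tail_int_neg {u : ℝ → ℂ} (hu : MemLp u 2 volume) :
    IntegrableOn (fun x : ℝ => ((x : ℂ))⁻¹ * u x) (Set.Iic (-1:ℝ)) volume := by
  have hpre : (Neg.neg ⁻¹' (Set.Iic (-1:ℝ)) : Set ℝ) = Set.Ici 1 := by
    ext x; simp [neg_le_neg_iff, le_neg]
  rw [← (Measure.measurePreserving_neg (volume : Measure ℝ)).integrableOn_comp_preimage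
      (Homeomorph.neg ℝ).measurableEmbedding, hpre]
  have hu' : MemLp (fun x : ℝ => u (-x)) 2 volume :=
    hu.comp_measurePreserving (Measure.measurePreserving_neg _)
  have h1 : IntegrableOn (fun x : ℝ => ((x : ℂ))⁻¹ * u (-x)) (Set.Ici (1:ℝ)) volume := by
    rw [integrableOn_Ici_iff_integrableOn_Ioi]
    exact tail_int hu'
  have h2 : IntegrableOn (fun x : ℝ => -(((x : ℂ))⁻¹ * u (-x))) (Set.Ici (1:ℝ)) volume := h1.neg
  refine h2.congr_fun (fun x _ => ?_) measurableSet_Ici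
  simp only [Function.comp]
  push_cast
  ring

lemma f_intOn (f : L2) (a b : ℝ) : IntegrableOn (fun x => f x) (Set.Ioc a b) volume :=
  ((Lp.memLp f).restrict _).integrable one_le_two

lemma f_intInt (f : L2) (a b : ℝ) : IntervalIntegrable (fun x => f x) volume a b :=
  ⟨f_intOn f a b, f_intOn f b a⟩

lemma gamma_exists (f : L2) (c : ℂ)
    (h : MemLp (fun x : ℝ => (x : ℂ) * f x - c) 2 volume) :
    ∃ Γ : ℂ, Tendsto (fun R : ℝ => ∫ x in Set.Ioc (-R) R, f x) atTop (nhds Γ) := by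
  set u : ℝ → ℂ := fun x => (x : ℂ) * f x - c with hu_def
  set w : ℝ → ℂ := fun x => ((x : ℂ))⁻¹ * u x with hw_def
  have hw1 : IntegrableOn w (Set.Ioi (1:ℝ)) volume := tail_int h
  have hw2 : IntegrableOn w (Set.Iic (-1:ℝ)) volume := tail_int_neg h
  have t2 : Tendsto (fun R : ℝ => ∫ x in (1:ℝ)..R, w x) atTop
      (nhds (∫ x in Set.Ioi (1:ℝ), w x)) :=
    intervalIntegral_tendsto_integral_Ioi 1 hw1 tendsto_id
  have t1 : Tendsto (fun R : ℝ => ∫ x in (-R)..(-1:ℝ), w x) atTop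
      (nhds (∫ x in Set.Iic (-1:ℝ), w x)) :=
    intervalIntegral_tendsto_integral_Iic (-1) hw2 tendsto_neg_atTop_atBot
  refine ⟨(∫ x in Set.Iic (-1:ℝ), w x) + (∫ x in (-1:ℝ)..1, f x)
      + (∫ x in Set.Ioi (1:ℝ), w x), ?_⟩
  have tc : Tendsto (fun _ : ℝ => (∫ x in (-1:ℝ)..1, f x)) atTop
      (nhds (∫ x in (-1:ℝ)..1, f x)) := tendsto_const_nhds
  have tall := (t1.add tc).add t2
  refine Tendsto.congr' ?_ tall
  filter_upwards [eventually_ge_atTop (1:ℝ)] with R hR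
  have hwI1 : IntervalIntegrable w volume 1 R := by
    rw [intervalIntegrable_iff_integrableOn_Ioc_of_le hR]
    exact hw1.mono_set Set.Ioc_subset_Ioi_self
  have hwI2 : IntervalIntegrable w volume (-R) (-1) := by
    rw [intervalIntegrable_iff_integrableOn_Ioc_of_le (by linarith)]
    exact hw2.mono_set (fun x hx => hx.2)
  have hinvI1 : IntervalIntegrable (fun x : ℝ => ((x : ℂ))⁻¹) volume 1 R := by
    apply ContinuousOn.intervalIntegrable
    apply ContinuousOn.inv₀ Complex.continuous_ofReal.continuousOn
    intro x hx
    rw [Set.uIcc_of_le hR] at hx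
    exact_mod_cast ne_of_gt (lt_of_lt_of_le one_pos hx.1)
  have hinvI2 : IntervalIntegrable (fun x : ℝ => ((x : ℂ))⁻¹) volume (-R) (-1) := by
    apply ContinuousOn.intervalIntegrable
    apply ContinuousOn.inv₀ Complex.continuous_ofReal.continuousOn
    intro x hx
    rw [Set.uIcc_of_le (by linarith : -R ≤ (-1:ℝ))] at hx
    have : x < 0 := lt_of_le_of_lt hx.2 (by norm_num)
    exact_mod_cast ne_of_lt this
  have split : (∫ x in Set.Ioc (-R) R, f x)
      = (∫ x in (-R)..(-1:ℝ), f x) + (∫ x in (-1:ℝ)..1, f x) + (∫ x in (1:ℝ)..R, f x) := by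
    rw [← intervalIntegral.integral_of_le (by linarith : -R ≤ R),
      ← intervalIntegral.integral_add_adjacent_intervals (f_intInt f (-R) 1) (f_intInt f 1 R),
      ← intervalIntegral.integral_add_adjacent_intervals (f_intInt f (-R) (-1)) (f_intInt f (-1) 1)]
  have eqR : (∫ x in (1:ℝ)..R, f x)
      = (∫ x in (1:ℝ)..R, w x) + c * ∫ x in (1:ℝ)..R, ((x : ℂ))⁻¹ := by
    rw [← intervalIntegral.integral_const_mul,
      ← intervalIntegral.integral_add hwI1 (hinvI1.const_mul c)]
    apply intervalIntegral.integral_congr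
    intro x hx
    rw [Set.uIcc_of_le hR] at hx
    have hx0 : (x : ℂ) ≠ 0 := by exact_mod_cast ne_of_gt (lt_of_lt_of_le one_pos hx.1)
    simp only [hw_def, hu_def]
    field_simp
    ring
  have eqL : (∫ x in (-R)..(-1:ℝ), f x)
      = (∫ x in (-R)..(-1:ℝ), w x) + c * ∫ x in (-R)..(-1:ℝ), ((x : ℂ))⁻¹ := by
    rw [← intervalIntegral.integral_const_mul,
      ← intervalIntegral.integral_add hwI2 (hinvI2.const_mul c)]
    apply intervalIntegral.integral_congr
    intro x hx
    rw [Set.uIcc_of_le (by linarith : -R ≤ (-1:ℝ))] at hx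
    have hx0 : (x : ℂ) ≠ 0 := by
      have : x < 0 := lt_of_le_of_lt hx.2 (by norm_num)
      exact_mod_cast ne_of_lt this
    simp only [hw_def, hu_def]
    field_simp
    ring
  have cancel : (∫ x in (-R)..(-1:ℝ), ((x : ℂ))⁻¹) = - ∫ x in (1:ℝ)..R, ((x : ℂ))⁻¹ := by
    have := intervalIntegral.integral_comp_neg (a := (1:ℝ)) (b := R)
      (fun x : ℝ => ((x : ℂ))⁻¹)
    rw [← this, ← intervalIntegral.integral_neg]
    apply intervalIntegral.integral_congr
    intro x _
    push_cast
    ring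
  rw [split, eqR, eqL, cancel]
  ring

/-- Green's identity for the Friedrichs model: for `f, g ∈ D(A*)`
the limits `Γ₁ f`, `Γ₁ g` exist and
`⟨A*f, g⟩ − ⟨f, A*g⟩ = Γ₁f·conj(Γ₂g) − Γ₂f·conj(Γ₁g) + ⟨f,ψ⟩⟨φ,g⟩ − ⟨f,φ⟩⟨ψ,g⟩`. -/
theorem statement_16 (φ ψ : L2) (f g : L2) (cf cg : ℂ)
    (hf : inDomAstar f cf) (hg : inDomAstar g cg) :
    ∃ Γ1f Γ1g : ℂ,
      Tendsto (fun R : ℝ => ∫ x in Set.Ioc (-R) R, f x) atTop (nhds Γ1f) ∧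
      Tendsto (fun R : ℝ => ∫ x in Set.Ioc (-R) R, g x) atTop (nhds Γ1g) ∧
      ⟪g, AstarOp φ ψ f cf hf⟫_ℂ - ⟪AstarOp φ ψ g cg hg, f⟫_ℂ
        = Γ1f * (starRingEnd ℂ) cg - cf * (starRingEnd ℂ) Γ1g
          + ⟪ψ, f⟫_ℂ * ⟪g, φ⟫_ℂ - ⟪φ, f⟫_ℂ * ⟪g, ψ⟫_ℂ := by
  obtain ⟨Γ1f, hΓf⟩ := gamma_exists f cf hf
  obtain ⟨Γ1g, hΓg⟩ := gamma_exists g cg hg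
  refine ⟨Γ1f, Γ1g, hΓf, hΓg, ?_⟩
  -- integrands
  have hA : Integrable (fun x : ℝ => (starRingEnd ℂ) (g x) * ((x : ℂ) * f x - cf)) volume := by
    have h0 := L2.integrable_inner (𝕜 := ℂ) g (hf.toLp _)
    refine h0.congr ?_
    filter_upwards [MemLp.coeFn_toLp hf] with x hx
    rw [RCLike.inner_apply, hx]
    ring
  have hB : Integrable (fun x : ℝ => (starRingEnd ℂ) ((x : ℂ) * g x - cg) * f x) volume := by
    have h0 := L2.integrable_inner (𝕜 := ℂ) (hg.toLp _) f
    refine h0.congr ?_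
    filter_upwards [MemLp.coeFn_toLp hg] with x hx
    rw [RCLike.inner_apply, hx]
    ring
  have e1 : ⟪g, hf.toLp _⟫_ℂ
      = ∫ x : ℝ, (starRingEnd ℂ) (g x) * ((x : ℂ) * f x - cf) := by
    rw [L2.inner_def]
    refine integral_congr_ae ?_
    filter_upwards [MemLp.coeFn_toLp hf] with x hx
    rw [RCLike.inner_apply, hx]
    ring
  have e2 : ⟪hg.toLp _, f⟫_ℂ
      = ∫ x : ℝ, (starRingEnd ℂ) ((x : ℂ) * g x - cg) * f x := by
    rw [L2.inner_def]
    refine integral_congr_ae ?_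
    filter_upwards [MemLp.coeFn_toLp hg] with x hx
    rw [RCLike.inner_apply, hx]
    ring
  -- pointwise identity
  have hpt : ∀ x : ℝ,
      (starRingEnd ℂ) (g x) * ((x : ℂ) * f x - cf)
        - (starRingEnd ℂ) ((x : ℂ) * g x - cg) * f x
      = (starRingEnd ℂ) cg * f x - cf * (starRingEnd ℂ) (g x) := by
    intro x
    simp only [map_sub, map_mul, Complex.conj_ofReal]
    ring
  have hh : Integrable
      (fun x : ℝ => (starRingEnd ℂ) cg * f x - cf * (starRingEnd ℂ) (g x)) volume :=
    (hA.sub hB).congr (ae_of_all _ hpt)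
  -- limit of set integrals of h over Ioc (-R) R : to the full integral
  have hmono : Monotone (fun R : ℝ => Set.Ioc (-R) R) := by
    intro a b hab x hx
    exact ⟨lt_of_le_of_lt (neg_le_neg hab) hx.1, hx.2.trans hab⟩
  have hunion : (⋃ R : ℝ, Set.Ioc (-R) R) = Set.univ := by
    ext x
    simp only [Set.mem_iUnion, Set.mem_univ, iff_true, Set.mem_Ioc]
    exact ⟨|x| + 1, by cases abs_cases x with
      | inl h => constructor <;> linarith [h.1]
      | inr h => constructor <;> linarith [h.1]⟩
  have T1 : Tendsto (fun R : ℝ => ∫ x in Set.Ioc (-R) R,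
        ((starRingEnd ℂ) cg * f x - cf * (starRingEnd ℂ) (g x))) atTop
      (nhds (∫ x : ℝ, ((starRingEnd ℂ) cg * f x - cf * (starRingEnd ℂ) (g x)))) := by
    have := tendsto_setIntegral_of_monotone (s := fun R : ℝ => Set.Ioc (-R) R)
      (fun _ => measurableSet_Ioc) hmono (by rw [hunion]; exact hh.integrableOn)
    rwa [hunion, Measure.restrict_univ] at this
  -- the same integrals computed by linearity
  have Teq : ∀ R : ℝ, (∫ x in Set.Ioc (-R) R,
        ((starRingEnd ℂ) cg * f x - cf * (starRingEnd ℂ) (g x)))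
      = (starRingEnd ℂ) cg * (∫ x in Set.Ioc (-R) R, f x)
        - cf * (starRingEnd ℂ) (∫ x in Set.Ioc (-R) R, g x) := by
    intro R
    have hgc : Integrable (fun x : ℝ => (starRingEnd ℂ) (g x))
        (volume.restrict (Set.Ioc (-R) R)) := by
      have h1 := (Complex.conjCLE : ℂ →L[ℝ] ℂ).integrable_comp (f_intOn g (-R) R)
      exact h1.congr (Filter.Eventually.of_forall fun x => by simp)
    rw [integral_sub ((f_intOn f (-R) R).const_mul _) (hgc.const_mul _),
      integral_const_mul, integral_const_mul, integral_conj]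
  have T2 : Tendsto (fun R : ℝ =>
        (starRingEnd ℂ) cg * (∫ x in Set.Ioc (-R) R, f x)
          - cf * (starRingEnd ℂ) (∫ x in Set.Ioc (-R) R, g x)) atTop
      (nhds ((starRingEnd ℂ) cg * Γ1f - cf * (starRingEnd ℂ) Γ1g)) := by
    refine Tendsto.sub (tendsto_const_nhds.mul hΓf) (tendsto_const_nhds.mul ?_)
    exact (Complex.continuous_conj.tendsto _).comp hΓg
  have key : (∫ x : ℝ, ((starRingEnd ℂ) cg * f x - cf * (starRingEnd ℂ) (g x)))
      = (starRingEnd ℂ) cg * Γ1f - cf * (starRingEnd ℂ) Γ1g := by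
    refine tendsto_nhds_unique T1 ?_
    exact T2.congr (fun R => (Teq R).symm)
  -- put everything together
  have hAB : (∫ x : ℝ, (starRingEnd ℂ) (g x) * ((x : ℂ) * f x - cf))
      - (∫ x : ℝ, (starRingEnd ℂ) ((x : ℂ) * g x - cg) * f x)
      = (starRingEnd ℂ) cg * Γ1f - cf * (starRingEnd ℂ) Γ1g := by
    rw [← integral_sub hA hB, integral_congr_ae (ae_of_all _ hpt), key]
  rw [AstarOp, AstarOp, inner_add_right, inner_add_left, inner_smul_right, inner_smul_left,
    inner_conj_symm, e1, e2]
  linear_combination hAB
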